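/- For every natural number p and every natural number n, 𝒞_n^{(p)} = A_p·F_n + B_p·F_{n+1} - ∑_{k=0}^{p} C(p,k)·B_k·n^{p-k}, as an identity of integers. -/

import Mathlib

/-- The convolution `𝒞_n^{(p)} = ∑_{i=0}^{n} i^p · F_{n-i}`, with the convention
`0^0 = 1` (which is the convention of `(0 : ℤ) ^ 0` in Lean). -/
def fibConv (n p : ℕ) : ℤ :=
  ∑ i ∈ Finset.range (n + 1), (i : ℤ) ^ p * (Nat.fib (n - i) : ℤ)

/-- The sequence `A` with `A_0 = 1` and
`A_p = (-1)^p + 2·∑_{j=0}^{⌊p/2⌋} C(p,2j+1)·A_{p-2j-1}` for `p > 0`. -/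
def A : ℕ → ℤ
  | 0 => 1
  | p + 1 => (-1) ^ (p + 1) + 2 * ∑ j ∈ Finset.range ((p + 1) / 2 + 1),
      (((p + 1).choose (2 * j + 1) : ℤ)) * A (p - 2 * j)
  decreasing_by exact Nat.lt_succ_of_le (Nat.sub_le p (2 * j))

/-- The sequence `B` with `B_0 = 1` and
`B_p = 2·∑_{j=0}^{⌊p/2⌋} C(p,2j+1)·B_{p-2j-1}` for `p > 0`. -/
def B : ℕ → ℤ
  | 0 => 1
  | p + 1 => 2 * ∑ j ∈ Finset.range ((p + 1) / 2 + 1),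
      (((p + 1).choose (2 * j + 1) : ℤ)) * B (p - 2 * j)
  decreasing_by exact Nat.lt_succ_of_le (Nat.sub_le p (2 * j))

open Finset


def Tr (c : ℤ) (b : ℕ → ℤ) (p : ℕ) : ℤ :=
  ∑ k ∈ Finset.range (p + 1), (p.choose k : ℤ) * b k * c ^ (p - k)

lemma Tr_zero (b : ℕ → ℤ) (p : ℕ) : Tr 0 b p = b p := by
  unfold Tr
  rw [Finset.sum_eq_single p]
  · simp
  · intro k hk hkp
    have : p - k ≠ 0 := by simp at hk; omega
    simp [this]
  · intro h; simp at h

lemma Tr_delta (c : ℤ) (p : ℕ) : Tr c (fun k => if k = 0 then 1 else 0) p = c ^ p := by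
  unfold Tr
  rw [Finset.sum_eq_single 0]
  · simp
  · intro k hk hk0; simp [hk0]
  · intro h; simp at h

lemma choose_inner (c d : ℤ) (p l : ℕ) (hl : l ≤ p) :
    ∑ k ∈ Finset.range (p + 1), ((p.choose k : ℤ) * (k.choose l : ℤ)) * d ^ (k - l) * c ^ (p - k)
      = (p.choose l : ℤ) * (c + d) ^ (p - l) := by
  rw [Finset.range_eq_Ico, ← Finset.sum_Ico_consecutive _ (Nat.zero_le l) (by omega : l ≤ p + 1)]
  have h0 : ∑ k ∈ Finset.Ico 0 l, ((p.choose k : ℤ) * (k.choose l : ℤ)) * d ^ (k - l) * c ^ (p - k) = 0 := by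
    apply Finset.sum_eq_zero
    intro k hk
    simp only [Finset.mem_Ico] at hk
    rw [Nat.choose_eq_zero_of_lt hk.2]
    simp
  rw [h0, zero_add, Finset.sum_Ico_eq_sum_range]
  have hrange : p + 1 - l = (p - l) + 1 := by omega
  rw [hrange]
  have hstep : ∀ i ∈ Finset.range ((p - l) + 1),
      ((p.choose (l + i) : ℤ) * ((l + i).choose l : ℤ)) * d ^ (l + i - l) * c ^ (p - (l + i))
        = (p.choose l : ℤ) * (d ^ i * c ^ ((p - l) - i) * ((p - l).choose i : ℤ)) := by
    intro i hi
    simp only [Finset.mem_range] at hi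
    have h1 : l + i ≤ p := by omega
    have h2 : l ≤ l + i := by omega
    have key := Nat.choose_mul (n := p) h2
    have hcast : (p.choose (l + i) : ℤ) * ((l + i).choose l : ℤ)
        = (p.choose l : ℤ) * ((p - l).choose (l + i - l) : ℤ) := by
      exact_mod_cast congrArg (Nat.cast : ℕ → ℤ) key
    rw [hcast]
    have h3 : l + i - l = i := by omega
    have h4 : p - (l + i) = (p - l) - i := by omega
    rw [h3, h4]; ring
  rw [Finset.sum_congr rfl hstep, ← Finset.mul_sum, ← add_pow d c (p - l), add_comm d c]

lemma Tr_comp (c d : ℤ) (b : ℕ → ℤ) (p : ℕ) :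
    Tr c (Tr d b) p = Tr (c + d) b p := by
  unfold Tr
  have hexp : ∀ k ∈ Finset.range (p + 1),
      (p.choose k : ℤ) * (∑ l ∈ Finset.range (k + 1), (k.choose l : ℤ) * b l * d ^ (k - l)) * c ^ (p - k)
        = ∑ l ∈ Finset.range (p + 1), ((p.choose k : ℤ) * (k.choose l : ℤ)) * b l * d ^ (k - l) * c ^ (p - k) := by
    intro k hk
    simp only [Finset.mem_range] at hk
    rw [Finset.mul_sum, Finset.sum_mul]
    rw [Finset.sum_subset (Finset.range_subset_range.2 (by omega : k + 1 ≤ p + 1))]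
    · apply Finset.sum_congr rfl; intro l _; ring
    · intro l hl hl'
      simp only [Finset.mem_range] at hl hl'
      rw [Nat.choose_eq_zero_of_lt (by omega : k < l)]
      simp
  rw [Finset.sum_congr rfl hexp, Finset.sum_comm]
  apply Finset.sum_congr rfl
  intro l hl
  simp only [Finset.mem_range] at hl
  have := choose_inner c d p l (by omega)
  calc ∑ k ∈ Finset.range (p + 1), ((p.choose k : ℤ) * (k.choose l : ℤ)) * b l * d ^ (k - l) * c ^ (p - k)
      = b l * ∑ k ∈ Finset.range (p + 1), ((p.choose k : ℤ) * (k.choose l : ℤ)) * d ^ (k - l) * c ^ (p - k) := by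
        rw [Finset.mul_sum]; apply Finset.sum_congr rfl; intro k _; ring
    _ = (p.choose l : ℤ) * b l * (c + d) ^ (p - l) := by rw [this]; ring

lemma split_parity (f : ℕ → ℤ) (N : ℕ) :
    ∑ k ∈ Finset.range N, f k
      = (∑ j ∈ Finset.range ((N + 1) / 2), f (2 * j))
        + ∑ j ∈ Finset.range (N / 2), f (2 * j + 1) := by
  induction N with
  | zero => simp
  | succ N ih =>
    rw [Finset.sum_range_succ, ih]
    rcases Nat.even_or_odd N with ⟨m, hm⟩ | ⟨m, hm⟩
    · subst hm
      have h1 : (m + m + 1 + 1) / 2 = m + 1 := by omega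
      have h2 : (m + m + 1) / 2 = m := by omega
      have h3 : (m + m) / 2 = m := by omega
      rw [h1, h2, h3, Finset.sum_range_succ]
      have : m + m = 2 * m := by ring
      rw [this]; ring
    · subst hm
      have h1 : (2 * m + 1 + 1 + 1) / 2 = m + 1 := by omega
      have h2 : (2 * m + 1 + 1) / 2 = m + 1 := by omega
      have h3 : (2 * m + 1) / 2 = m := by omega
      rw [h1, h2, h3, Finset.sum_range_succ (f := fun j => f (2 * j + 1))]
      ring

lemma oddsum (b : ℕ → ℤ) (p : ℕ) :
    ∑ k ∈ Finset.range (p + 2), ((p + 1).choose k : ℤ) * b k * (1 - (-1) ^ (p + 1 - k))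
      = 2 * ∑ j ∈ Finset.range ((p + 1) / 2 + 1), ((p + 1).choose (2 * j + 1) : ℤ) * b (p - 2 * j) := by
  rw [← Finset.sum_range_reflect]
  have hred : ∀ k, p + 2 - 1 - k = p + 1 - k := by intro k; omega
  simp only [hred]
  rw [split_parity (fun m => ((p + 1).choose (p + 1 - m) : ℤ) * b (p + 1 - m) * (1 - (-1) ^ (p + 1 - (p + 1 - m)))) (p + 2)]
  have heven : ∑ j ∈ Finset.range ((p + 2 + 1) / 2),
      ((p + 1).choose (p + 1 - 2 * j) : ℤ) * b (p + 1 - 2 * j) * (1 - (-1) ^ (p + 1 - (p + 1 - 2 * j))) = 0 := by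
    apply Finset.sum_eq_zero
    intro j hj
    simp only [Finset.mem_range] at hj
    have h1 : 2 * j ≤ p + 1 := by omega
    have h2 : p + 1 - (p + 1 - 2 * j) = 2 * j := by omega
    rw [h2, Even.neg_one_pow ⟨j, by ring⟩]
    ring
  rw [heven, zero_add]
  have hodd : ∀ j ∈ Finset.range ((p + 2) / 2),
      ((p + 1).choose (p + 1 - (2 * j + 1)) : ℤ) * b (p + 1 - (2 * j + 1)) * (1 - (-1) ^ (p + 1 - (p + 1 - (2 * j + 1))))
        = 2 * (((p + 1).choose (2 * j + 1) : ℤ) * b (p - 2 * j)) := by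
    intro j hj
    simp only [Finset.mem_range] at hj
    have h1 : 2 * j + 1 ≤ p + 1 := by omega
    have h2 : p + 1 - (p + 1 - (2 * j + 1)) = 2 * j + 1 := by omega
    have h3 : p + 1 - (2 * j + 1) = p - 2 * j := by omega
    have h4 : (p + 1).choose (p + 1 - (2 * j + 1)) = (p + 1).choose (2 * j + 1) :=
      Nat.choose_symm h1
    rw [h2, h4, h3, Odd.neg_one_pow ⟨j, by ring⟩]
    ring
  rw [Finset.sum_congr rfl hodd, ← Finset.mul_sum]
  rcases Nat.even_or_odd p with ⟨m, hm⟩ | ⟨m, hm⟩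
  · congr 1
    apply Finset.sum_congr _ (fun _ _ => rfl)
    congr 1
    omega
  · have hr1 : (p + 2) / 2 = m + 1 := by omega
    have hr2 : (p + 1) / 2 + 1 = m + 2 := by omega
    rw [hr1, hr2, Finset.sum_range_succ (n := m + 1)]
    have hz : (p + 1).choose (2 * (m + 1) + 1) = 0 :=
      Nat.choose_eq_zero_of_lt (by omega)
    rw [hz]
    simp
lemma Tdiff (b : ℕ → ℤ) (p : ℕ) :
    Tr 1 b p - Tr (-1) b p
      = ∑ k ∈ Finset.range (p + 1), (p.choose k : ℤ) * b k * (1 - (-1) ^ (p - k)) := by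
  unfold Tr
  rw [← Finset.sum_sub_distrib]
  apply Finset.sum_congr rfl
  intro k _
  ring

lemma Brec (p : ℕ) :
    Tr 1 B p - Tr (-1) B p = B p - (if p = 0 then 1 else 0) := by
  cases p with
  | zero => simp [Tr, B]
  | succ p =>
    rw [Tdiff, oddsum B p, B]
    simp

lemma Arec (p : ℕ) :
    Tr 1 A p - Tr (-1) A p = A p - (-1) ^ p := by
  cases p with
  | zero => simp [Tr, A]
  | succ p =>
    rw [Tdiff, oddsum A p, A]
    ring

lemma BrecT (c : ℤ) (p : ℕ) :
    Tr (c + 1) B p - Tr (c + -1) B p = Tr c B p - c ^ p := by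
  have h1 : Tr c (fun k => Tr 1 B k) p - Tr c (fun k => Tr (-1) B k) p
      = Tr c (fun k => B k) p - Tr c (fun k => if k = 0 then 1 else 0) p := by
    unfold Tr
    rw [← Finset.sum_sub_distrib, ← Finset.sum_sub_distrib]
    apply Finset.sum_congr rfl
    intro k _
    have hb := Brec k
    unfold Tr at hb
    linear_combination (p.choose k : ℤ) * c ^ (p - k) * hb
  have h2 : Tr c (fun k => Tr 1 B k) p = Tr (c + 1) B p := Tr_comp c 1 B p
  have h3 : Tr c (fun k => Tr (-1) B k) p = Tr (c + -1) B p := Tr_comp c (-1) B p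
  have h4 : Tr c (fun k => if k = 0 then 1 else 0) p = c ^ p := Tr_delta c p
  rw [h2, h3, h4] at h1
  exact h1

lemma ABrec (p : ℕ) :
    Tr 1 (Tr (-1) B) p - Tr (-1) (Tr (-1) B) p = Tr (-1) B p - (-1) ^ p := by
  have h1 : Tr 1 (Tr (-1) B) p = Tr 0 B p := by
    rw [show (0 : ℤ) = 1 + -1 by ring]
    exact Tr_comp 1 (-1) B p
  have h2 : Tr (-1) (Tr (-1) B) p = Tr (-2) B p := by
    rw [show (-2 : ℤ) = -1 + -1 by ring]
    exact Tr_comp (-1) (-1) B p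
  have h3 := BrecT (-1) p
  rw [show (-1 : ℤ) + 1 = 0 by ring, show (-1 : ℤ) + -1 = -2 by ring] at h3
  rw [h1, h2]
  exact h3

lemma AB : ∀ p, A p = Tr (-1) B p := by
  intro p
  induction p using Nat.strong_induction_on with
  | _ p ih =>
    have hA := Arec p
    have hB' := ABrec p
    have d1 := Tdiff A p
    have d2 := Tdiff (Tr (-1) B) p
    have hsplit : ∑ k ∈ Finset.range (p + 1),
        (p.choose k : ℤ) * (A k - Tr (-1) B k) * (1 - (-1) ^ (p - k))
        = (Tr 1 A p - Tr (-1) A p) - (Tr 1 (Tr (-1) B) p - Tr (-1) (Tr (-1) B) p) := by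
      rw [d1, d2, ← Finset.sum_sub_distrib]
      apply Finset.sum_congr rfl
      intro k _
      ring
    have hzero : ∑ k ∈ Finset.range (p + 1),
        (p.choose k : ℤ) * (A k - Tr (-1) B k) * (1 - (-1) ^ (p - k)) = 0 := by
      apply Finset.sum_eq_zero
      intro k hk
      simp only [Finset.mem_range] at hk
      by_cases hkp : k = p
      · subst hkp
        simp
      · rw [ih k (by omega), sub_self]
        ring
    linear_combination hzero - hsplit + hB' - hA

lemma Tstep (x : ℤ) (p : ℕ) :
    Tr x B p + Tr (x + 1) B p - Tr (x + 2) B p = (x + 1) ^ p := by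
  have h := BrecT (x + 1) p
  rw [show x + 1 + 1 = x + 2 by ring, show x + 1 + -1 = x by ring] at h
  linear_combination -h

lemma fibConv_rec (n p : ℕ) :
    fibConv (n + 2) p = fibConv (n + 1) p + fibConv n p + ((n : ℤ) + 1) ^ p := by
  unfold fibConv
  have e2 : ∑ i ∈ Finset.range (n + 2 + 1), (i : ℤ) ^ p * (Nat.fib (n + 2 - i) : ℤ)
      = (∑ i ∈ Finset.range (n + 1), (i : ℤ) ^ p * (Nat.fib (n + 2 - i) : ℤ))
        + ((n + 1 : ℕ) : ℤ) ^ p * (Nat.fib 1 : ℤ) + ((n + 2 : ℕ) : ℤ) ^ p * (Nat.fib 0 : ℤ) := by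
    rw [Finset.sum_range_succ, Finset.sum_range_succ]
    simp only [show n + 2 - (n + 1) = 1 by omega, show n + 2 - (n + 2) = 0 by omega]
  have e1 : ∑ i ∈ Finset.range (n + 1 + 1), (i : ℤ) ^ p * (Nat.fib (n + 1 - i) : ℤ)
      = ∑ i ∈ Finset.range (n + 1), (i : ℤ) ^ p * (Nat.fib (n + 1 - i) : ℤ) := by
    rw [Finset.sum_range_succ]
    simp [show n + 1 - (n + 1) = 0 by omega]
  have esplit : ∀ i ∈ Finset.range (n + 1), (i : ℤ) ^ p * (Nat.fib (n + 2 - i) : ℤ)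
      = (i : ℤ) ^ p * (Nat.fib (n + 1 - i) : ℤ) + (i : ℤ) ^ p * (Nat.fib (n - i) : ℤ) := by
    intro i hi
    simp only [Finset.mem_range] at hi
    have h1 : n + 2 - i = (n - i) + 2 := by omega
    have h2 : n + 1 - i = (n - i) + 1 := by omega
    rw [h1, h2, Nat.fib_add_two]
    push_cast
    ring
  rw [e2, Finset.sum_congr rfl esplit, Finset.sum_add_distrib, e1]
  simp [Nat.fib_one, Nat.fib_zero]


/-- **Theorem 2 of the paper.** For all `p n : ℕ`,
`𝒞_n^{(p)} = A_p·F_n + B_p·F_{n+1} - ∑_{k=0}^{p} C(p,k)·B_k·n^(p-k)`. -/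
theorem fibConv_eq (p n : ℕ) :
    fibConv n p =
      A p * (Nat.fib n : ℤ) + B p * (Nat.fib (n + 1) : ℤ)
        - ∑ k ∈ Finset.range (p + 1), (p.choose k : ℤ) * B k * (n : ℤ) ^ (p - k) := by
  induction n using Nat.twoStepInduction with
  | zero =>
    have hT : (∑ k ∈ Finset.range (p + 1), (p.choose k : ℤ) * B k * ((0 : ℕ) : ℤ) ^ (p - k))
        = Tr 0 B p := by norm_num [Tr]
    rw [hT, Tr_zero]
    simp [fibConv]
  | one =>
    have hT : (∑ k ∈ Finset.range (p + 1), (p.choose k : ℤ) * B k * ((1 : ℕ) : ℤ) ^ (p - k))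
        = Tr 1 B p := by norm_num [Tr]
    rw [hT]
    have hfc : fibConv 1 p = (0 : ℤ) ^ p := by
      simp [fibConv, Finset.sum_range_succ]
    have hz : (0 : ℤ) ^ p = if p = 0 then 1 else 0 := zero_pow_eq p
    have hb := Brec p
    have ha := AB p
    have hd : Tr (-1) B p + B p - Tr 1 B p = (if p = 0 then 1 else 0) := by
      linear_combination -hb
    rw [hfc, hz, Nat.fib_one, Nat.fib_two]
    push_cast
    linear_combination -ha - hd
  | more n ih1 ih2 =>
    have hrec := fibConv_rec n p
    have hstep := Tstep (n : ℤ) p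
    have hf2 : (Nat.fib (n + 2) : ℤ) = (Nat.fib (n + 1) : ℤ) + (Nat.fib n : ℤ) := by
      rw [Nat.fib_add_two]; push_cast; ring
    have hf3 : (Nat.fib (n + 2 + 1) : ℤ) = (Nat.fib (n + 1 + 1) : ℤ) + (Nat.fib (n + 1) : ℤ) := by
      rw [show n + 2 + 1 = (n + 1) + 2 by ring, Nat.fib_add_two]; push_cast; ring
    have hT0 : (∑ k ∈ Finset.range (p + 1), (p.choose k : ℤ) * B k * ((n : ℕ) : ℤ) ^ (p - k))
        = Tr (n : ℤ) B p := rfl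
    have hT1 : (∑ k ∈ Finset.range (p + 1), (p.choose k : ℤ) * B k * (((n + 1 : ℕ)) : ℤ) ^ (p - k))
        = Tr ((n : ℤ) + 1) B p := by
      apply Finset.sum_congr rfl; intro k _; push_cast; ring
    have hT2 : (∑ k ∈ Finset.range (p + 1), (p.choose k : ℤ) * B k * (((n + 2 : ℕ)) : ℤ) ^ (p - k))
        = Tr ((n : ℤ) + 2) B p := by
      apply Finset.sum_congr rfl; intro k _; push_cast; ring
    rw [hT0] at ih1
    rw [hT1] at ih2
    rw [hT2, hf2, hf3, hrec, ih1, ih2]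
    linear_combination -hstep
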